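/- Suppose |S| ≥ |T| ≥ 2. For every ε ∈ (0,1) there exists a nonempty open subset O ⊆ Δ(S)^T (product topology) such that every tuple π = (π(t))_{t∈T} ∈ O satisfies convex independence, and yet there exist contamination levels ε_t ∈ (0, ε] (t ∈ T) and a value function v : T → ℝ such that no menu c : T → ℝ^S achieves full extraction for the beliefs t ↦ Π_{ε_t}(t). -/

import Mathlib

noncomputable section

/-- Euclidean inner product on ℝ^S. -/
def dotp {S : Type*} [Fintype S] (x y : S → ℝ) : ℝ := ∑ s, x s * y s

/-- The ε-contamination of the point beliefs `p`. -/
def contaminated {S T : Type*} [Fintype S] (p : T → (S → ℝ)) (ε : ℝ) (t : T) :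
    Set (S → ℝ) :=
  {x | ∃ q ∈ stdSimplex ℝ S, x = (1 - ε) • p t + ε • q}

/-- A menu `c` achieves full extraction for beliefs `P` and values `v`. -/
def FullExtraction {S T : Type*} [Fintype S] [Fintype T]
    (P : T → Set (S → ℝ)) (v : T → ℝ) (c : T → (S → ℝ)) : Prop :=
  ∀ t : T, (∀ π ∈ P t, dotp π (c t) ≤ v t) ∧
    (∃ π ∈ P t, dotp π (c t) = v t) ∧
    (∀ π ∈ P t, ∀ s, s ≠ t → v t ≤ dotp π (c s))

/-- A nonempty open subset of `Δ(S)^T` (with the product topology), on which every tuple of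
point beliefs satisfies convex independence and yet full extraction fails for suitable
contamination levels `ε_t ∈ (0, ε]`.  Relatively open subsets of `Δ(S)^T` are exactly the
intersections of open subsets of the ambient product space with `Δ(S)^T`. -/
theorem stmt_12 {S T : Type*} [Fintype S] [Fintype T] [Nonempty S] [Nonempty T]
    (hST : Fintype.card T ≤ Fintype.card S) (hT : 2 ≤ Fintype.card T)
    (ε : ℝ) (hε0 : 0 < ε) (hε1 : ε < 1) :
    ∃ U : Set (T → (S → ℝ)), IsOpen U ∧
      (∃ p ∈ U, ∀ t, p t ∈ stdSimplex ℝ S) ∧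
      ∀ p ∈ U, (∀ t, p t ∈ stdSimplex ℝ S) →
        ((∀ t : T, p t ∉ closure (convexHull ℝ (p '' {s | s ≠ t}))) ∧
          ∃ εt : T → ℝ, (∀ t, 0 < εt t ∧ εt t ≤ ε) ∧
            ∃ v : T → ℝ, ∀ c : T → (S → ℝ),
              ¬ FullExtraction (fun t => contaminated p (εt t) t) v c) := by
  classical
  obtain ⟨ι⟩ : Nonempty (T ↪ S) := Function.Embedding.nonempty_of_card_le hST
  have hι : Function.Injective ι := ι.injective
  set n : ℝ := (Fintype.card S : ℝ) with hn_def
  have hn1 : (1 : ℝ) ≤ n := by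
    have h : 1 ≤ Fintype.card S := Fintype.card_pos
    rw [hn_def]; exact_mod_cast h
  have hn0 : (0 : ℝ) < n := lt_of_lt_of_le one_pos hn1
  set ε' : ℝ := min ε (1/2) with hε'_def
  have hε'0 : 0 < ε' := lt_min hε0 (by norm_num)
  have hε'le : ε' ≤ ε := min_le_left _ _
  have hε'half : ε' ≤ 1/2 := min_le_right _ _
  have h1ε' : (0:ℝ) < 1 - ε' := by linarith
  set δ : ℝ := ε' / (3 * (1 - ε') * n) with hδ_def
  have hδ0 : 0 < δ := div_pos hε'0 (by positivity)
  have hkey : 3 * δ * (1 - ε') * n = ε' := by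
    rw [hδ_def]; field_simp
  set r : ℝ := 2 * δ with hr_def
  have hr0 : 0 < r := by positivity
  have hr1 : r ≤ 1 := by
    have h1 : ε' ≤ 1 - ε' := by linarith
    have h2 : 3 * δ * (1 - ε') * n = ε' := hkey
    nlinarith [mul_pos h1ε' hn0, hδ0]
  clear_value n ε' δ r
  -- the center point
  set p₀ : T → S → ℝ := fun t s => (1 - r)/n + if s = ι t then r else 0 with hp₀_def
  have hp₀mem : ∀ t, p₀ t ∈ stdSimplex ℝ S := by
    intro t
    constructor
    · intro s
      have : (0:ℝ) ≤ (1 - r)/n := div_nonneg (by linarith) hn0.le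
      by_cases h : s = ι t <;> simp [hp₀_def, h] <;> linarith
    · simp only [hp₀_def]
      rw [Finset.sum_add_distrib, Finset.sum_const, Finset.sum_ite_eq' Finset.univ (ι t)]
      simp [Finset.card_univ, ← hn_def]
      field_simp
      ring
  clear_value p₀
  refine ⟨Metric.ball p₀ δ, Metric.isOpen_ball, ⟨p₀, Metric.mem_ball_self hδ0, hp₀mem⟩, ?_⟩
  intro p hpU hpS
  have hclose : ∀ t s, |p t s - p₀ t s| < δ := by
    intro t s
    have h1 : dist (p t s) (p₀ t s) ≤ dist (p t) (p₀ t) := dist_le_pi_dist (p t) (p₀ t) s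
    have h2 : dist (p t) (p₀ t) ≤ dist p p₀ := dist_le_pi_dist p p₀ t
    have h3 : dist p p₀ < δ := hpU
    rw [Real.dist_eq] at h1
    linarith
  constructor
  · -- convex independence
    intro t hmem
    set B : ℝ := (1 - r)/n + δ with hB_def
    have hhull : closure (convexHull ℝ (p '' {s | s ≠ t})) ⊆ {x : S → ℝ | x (ι t) ≤ B} := by
      apply closure_minimal
      · apply convexHull_min
        · rintro x ⟨s, hs, rfl⟩
          have hne : ι s ≠ ι t := fun h => hs (hι h)
          have h0 : p₀ s (ι t) = (1 - r)/n := by simp [hp₀_def, hne.symm]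
          have := hclose s (ι t)
          rw [h0] at this
          have := abs_lt.mp this
          simp only [Set.mem_setOf_eq, hB_def]
          linarith [this.1, this.2]
        · exact convex_halfSpace_le (LinearMap.isLinear (LinearMap.proj (ι t) : (S → ℝ) →ₗ[ℝ] ℝ)) B
      · exact isClosed_le (continuous_apply (ι t)) continuous_const
    have hx : p t (ι t) ≤ B := hhull hmem
    have h0 : p₀ t (ι t) = (1 - r)/n + r := by simp [hp₀_def]
    have := abs_lt.mp (hclose t (ι t))
    rw [h0] at this
    have h1 : p t (ι t) > (1 - r)/n + r - δ := by linarith [this.1]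
    rw [hB_def] at hx
    rw [hr_def] at h1
    linarith
  · -- impossibility of full extraction
    obtain ⟨t1, t2, ht12⟩ : ∃ t1 t2 : T, t1 ≠ t2 := by
      have : Nontrivial T := Fintype.one_lt_card_iff_nontrivial.mp hT
      exact exists_pair_ne T
    refine ⟨fun _ => ε', fun _ => ⟨hε'0, hε'le⟩, fun t => if t = t1 then 1 else 0, ?_⟩
    intro c hFE
    -- the uniform belief lies in every contaminated set
    have hw : ∀ t, (fun _ : S => 1/n) ∈ contaminated p ε' t := by
      intro t
      refine ⟨fun s => (1/n - (1 - ε') * p t s)/ε', ⟨?_, ?_⟩, ?_⟩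
      · intro s
        apply div_nonneg _ hε'0.le
        have hub : p t s ≤ (1 - r)/n + r + δ := by
          have h0 : p₀ t s ≤ (1 - r)/n + r := by
            by_cases h : s = ι t <;> simp [hp₀_def, h] <;> linarith
          have := abs_lt.mp (hclose t s)
          linarith [this.2]
        have hr3 : r + δ = 3 * δ := by rw [hr_def]; ring
        have h1 : (1 - ε') * p t s ≤ (1 - ε') * ((1 - r)/n + 3 * δ) :=
          mul_le_mul_of_nonneg_left (by linarith) h1ε'.le
        have h2 : (1 - ε') * ((1 - r)/n + 3 * δ) ≤ 1/n := by
          have hne : n ≠ 0 := ne_of_gt hn0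
          have hexp : (1 - ε') * ((1 - r)/n + 3 * δ)
              = ((1 - ε') * (1 - r) + 3 * δ * (1 - ε') * n)/n := by
            field_simp
          rw [hexp, hkey, div_le_div_iff₀ hn0 hn0]
          nlinarith [mul_pos h1ε' hr0]
        linarith
      · rw [← Finset.sum_div]
        rw [Finset.sum_sub_distrib, Finset.sum_const, ← Finset.mul_sum, (hpS t).2]
        simp [Finset.card_univ, ← hn_def]
        field_simp
        ring
      · funext s
        have hε'ne : ε' ≠ 0 := ne_of_gt hε'0
        simp only [Pi.add_apply, Pi.smul_apply, smul_eq_mul]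
        field_simp
        ring
    have h1 := (hFE t1).2.2 (fun _ : S => 1/n) (hw t1) t2 ht12.symm
    have h2 := (hFE t2).1 (fun _ : S => 1/n) (hw t2)
    simp only [if_neg ht12.symm] at h2
    norm_num [one_div] at h1 h2
    linarith
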